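/- The function x ↦ (π/8)·csch²(πx/2)·[2π²x²·coth²(πx/2) + π²x²·csch²(πx/2) − 6πx·coth(πx/2) + 2] is nonnegative for all x > 0. -/

import Mathlib

open Real

lemma nonneg_of_deriv (f f' : ℝ → ℝ) (hd : ∀ x, HasDerivAt f (f' x) x) (hf0 : f 0 = 0)
    (h' : ∀ x, 0 ≤ x → 0 ≤ f' x) : ∀ x, 0 ≤ x → 0 ≤ f x := by
  intro x hx
  have hmono : MonotoneOn f (Set.Ici (0:ℝ)) := by
    apply monotoneOn_of_deriv_nonneg (convex_Ici 0)
    · exact fun y _ => (hd y).continuousAt.continuousWithinAt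
    · exact fun y _ => ((hd y).differentiableAt).differentiableWithinAt
    · intro y hy
      rw [(hd y).deriv]
      exact h' y (le_of_lt (by simpa using hy))
  have := hmono (Set.mem_Ici.2 le_rfl) (Set.mem_Ici.2 hx) hx
  simpa [hf0] using this

lemma sinh_le_mul_cosh : ∀ x : ℝ, 0 ≤ x → Real.sinh x ≤ x * Real.cosh x := by
  have h := nonneg_of_deriv (fun x => x * Real.cosh x - Real.sinh x)
      (fun x => x * Real.sinh x) ?_ (by simp) ?_
  · intro x hx
    have := h x hx
    linarith
  · intro x
    have := ((hasDerivAt_id x).mul (Real.hasDerivAt_cosh x)).sub (Real.hasDerivAt_sinh x)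
    refine HasDerivAt.congr_deriv this ?_
    simp only [id_eq]
    ring
  · intro x hx
    exact mul_nonneg hx (Real.sinh_nonneg_iff.2 hx)

lemma key2 : ∀ s : ℝ, 0 ≤ s → 0 ≤ s * Real.sinh s + (s^2 - 3) * Real.cosh s + 4 := by
  intro s hs
  rcases le_or_gt 2 s with h | h
  · have h1 : 0 ≤ s * Real.sinh s := mul_nonneg hs (Real.sinh_nonneg_iff.2 hs)
    have h2 : 0 ≤ (s^2 - 3) * Real.cosh s :=
      mul_nonneg (by nlinarith) (Real.cosh_pos _).le
    linarith
  · set c := Real.cosh (s/2) with hc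
    set sh := Real.sinh (s/2) with hshd
    have hcs : Real.cosh s = 2 * c^2 - 1 := by
      rw [show s = 2 * (s/2) by ring, Real.cosh_two_mul, Real.cosh_sq]
      ring
    have hid : c^2 = sh^2 + 1 := Real.cosh_sq (s/2)
    have hb : sh ≤ (s/2) * c := sinh_le_mul_cosh (s/2) (by linarith)
    have hshn : 0 ≤ sh := Real.sinh_nonneg_iff.2 (by linarith)
    have hcn : (0:ℝ) < c := Real.cosh_pos _
    have h1 : 0 ≤ s * Real.sinh s := mul_nonneg hs (Real.sinh_nonneg_iff.2 hs)
    rw [hcs]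
    nlinarith [sq_nonneg (s*c - 2*sh), sq_nonneg s, sq_nonneg (s^2 - 3), mul_pos hcn hcn,
      sq_nonneg (s*c), sq_nonneg (s*sh), mul_nonneg (mul_nonneg hs hs) (sq_nonneg c)]

lemma key1 : ∀ s : ℝ, 0 ≤ s → 0 ≤ (s^2 - 2) * Real.sinh s - s * Real.cosh s + 4 * s := by
  apply nonneg_of_deriv _ (fun s => s * Real.sinh s + (s^2 - 3) * Real.cosh s + 4)
  · intro s
    have h1 : HasDerivAt (fun s : ℝ => (s^2 - 2) * Real.sinh s)
        ((2*s) * Real.sinh s + (s^2-2) * Real.cosh s) s := by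
      have := (((hasDerivAt_pow 2 s).sub_const 2).mul (Real.hasDerivAt_sinh s))
      refine HasDerivAt.congr_deriv this ?_
      push_cast
      ring
    have h2 : HasDerivAt (fun s : ℝ => s * Real.cosh s) (Real.cosh s + s * Real.sinh s) s := by
      have := (hasDerivAt_id s).mul (Real.hasDerivAt_cosh s)
      refine HasDerivAt.congr_deriv this ?_
      simp only [id_eq]
      ring
    have := (h1.sub h2).add ((hasDerivAt_id s).const_mul 4)
    refine HasDerivAt.congr_deriv this ?_
    ring
  · simp
  · exact key2

lemma key0 : ∀ s : ℝ, 0 ≤ s → 0 ≤ (s^2 + 1) * Real.cosh s - 3 * s * Real.sinh s + 2 * s^2 - 1 := by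
  apply nonneg_of_deriv _ (fun s => (s^2 - 2) * Real.sinh s - s * Real.cosh s + 4 * s)
  · intro s
    have h1 : HasDerivAt (fun s : ℝ => (s^2 + 1) * Real.cosh s)
        ((2*s) * Real.cosh s + (s^2+1) * Real.sinh s) s := by
      have := (((hasDerivAt_pow 2 s).add_const 1).mul (Real.hasDerivAt_cosh s))
      refine HasDerivAt.congr_deriv this ?_
      push_cast
      ring
    have h2 : HasDerivAt (fun s : ℝ => 3 * s * Real.sinh s)
        (3 * Real.sinh s + 3 * s * Real.cosh s) s := by
      have := (((hasDerivAt_id s).const_mul 3).mul (Real.hasDerivAt_sinh s))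
      refine HasDerivAt.congr_deriv this ?_
      simp only [id_eq]
      ring
    have h3 : HasDerivAt (fun s : ℝ => 2 * s^2) (4 * s) s := by
      have := (hasDerivAt_pow 2 s).const_mul (2:ℝ)
      refine HasDerivAt.congr_deriv this ?_
      push_cast
      ring
    have := (((h1.sub h2).add h3).sub_const 1)
    refine HasDerivAt.congr_deriv this ?_
    ring
  · simp
  · exact key1

theorem stmt_3 (x : ℝ) (hx : 0 < x) :
    0 ≤ (π / 8) * (1 / Real.sinh (π * x / 2)) ^ 2 *
      (2 * π ^ 2 * x ^ 2 * (Real.cosh (π * x / 2) / Real.sinh (π * x / 2)) ^ 2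
        + π ^ 2 * x ^ 2 * (1 / Real.sinh (π * x / 2)) ^ 2
        - 6 * π * x * (Real.cosh (π * x / 2) / Real.sinh (π * x / 2)) + 2) := by
  have hpi := Real.pi_pos
  have hsp : 0 < Real.sinh (π * x / 2) := Real.sinh_pos_iff.2 (by positivity)
  set c := Real.cosh (π * x / 2) with hc
  set sh := Real.sinh (π * x / 2) with hshd
  have hid : c^2 = sh^2 + 1 := Real.cosh_sq _
  have hkey := key0 (π * x) (by positivity)
  rw [show π * x = 2 * (π * x / 2) by ring, Real.cosh_two_mul, Real.sinh_two_mul,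
    Real.cosh_sq] at hkey
  -- hkey now in terms of c, sh
  have hB : 0 ≤ 2 * π ^ 2 * x ^ 2 * (c / sh) ^ 2
        + π ^ 2 * x ^ 2 * (1 / sh) ^ 2 - 6 * π * x * (c / sh) + 2 := by
    have hmul : 2 * π ^ 2 * x ^ 2 * (c / sh) ^ 2 + π ^ 2 * x ^ 2 * (1 / sh) ^ 2
        - 6 * π * x * (c / sh) + 2
        = (2 * π^2 * x^2 * c^2 + π^2 * x^2 - 6 * π * x * c * sh + 2 * sh^2) / sh^2 := by
      field_simp
    rw [hmul]
    apply div_nonneg _ (sq_nonneg sh)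
    nlinarith [hkey, hid]
  have h1 : (0:ℝ) ≤ π / 8 * (1 / sh)^2 := by positivity
  exact mul_nonneg h1 hB
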